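/- In R = K[x,y,z,w], for b ≥ 1 the four polynomials w², w(xz−y²), (xz−y²)², x^{b−1}(xz−y²) − z^b w form a Gröbner basis (with respect to the degree reverse lexicographic order with x > y > z > w) of the ideal I_X they generate; in particular the initial ideal of I_X is ⟨w², y²w, y⁴, x^{b−1}y²⟩. -/

import Mathlib

set_option maxHeartbeats 2000000

open MvPolynomial

/-- Degrevlex on exponents in 4 variables `x > y > z > w` (indices `0 > 1 > 2 > 3`). -/
def drlt {N : ℕ} (a b : Fin N →₀ ℕ) : Prop :=
  (∑ i, a i) < (∑ i, b i) ∨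
  ((∑ i, a i) = (∑ i, b i) ∧ ∃ i : Fin N, b i < a i ∧ ∀ j : Fin N, i < j → a j = b j)

namespace Drlt

variable {N : ℕ} {a b c : Fin N →₀ ℕ}

theorem irrefl (a : Fin N →₀ ℕ) : ¬ drlt a a := by
  rintro (h | ⟨-, i, hi, -⟩)
  · exact lt_irrefl _ h
  · exact lt_irrefl _ hi

theorem total (h : a ≠ b) : drlt a b ∨ drlt b a := by
  rcases lt_trichotomy (∑ i, a i) (∑ i, b i) with hs | hs | hs
  · exact Or.inl (Or.inl hs)
  · have hne : (Finset.univ.filter (fun i => a i ≠ b i)).Nonempty := by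
      by_contra hcon
      rw [Finset.not_nonempty_iff_eq_empty, Finset.filter_eq_empty_iff] at hcon
      exact h (Finsupp.ext fun i => by
        by_contra hi; exact (hcon (Finset.mem_univ i)) hi)
    set i := (Finset.univ.filter (fun i => a i ≠ b i)).max' hne with hidef
    have hmemi : i ∈ Finset.univ.filter (fun i => a i ≠ b i) := Finset.max'_mem _ _
    have hine : a i ≠ b i := (Finset.mem_filter.mp hmemi).2
    have hgt : ∀ j : Fin N, i < j → a j = b j := by
      intro j hj
      by_contra hja
      have : j ≤ i := Finset.le_max' _ j (Finset.mem_filter.mpr ⟨Finset.mem_univ _, hja⟩)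
      exact absurd hj (not_lt.mpr this)
    rcases lt_or_gt_of_ne hine with hlt | hlt
    · exact Or.inr (Or.inr ⟨hs.symm, i, hlt, fun j hj => (hgt j hj).symm⟩)
    · exact Or.inl (Or.inr ⟨hs, i, hlt, hgt⟩)
  · exact Or.inr (Or.inl hs)

theorem trans (hab : drlt a b) (hbc : drlt b c) : drlt a c := by
  rcases hab with hab | ⟨hab, i, hi, hia⟩
  · rcases hbc with hbc | ⟨hbc, _⟩
    · exact Or.inl (hab.trans hbc)
    · exact Or.inl (hbc ▸ hab)
  · rcases hbc with hbc | ⟨hbc, i', hi', hia'⟩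
    · exact Or.inl (hab ▸ hbc)
    · refine Or.inr ⟨hab.trans hbc, ?_⟩
      rcases lt_trichotomy i i' with hii | hii | hii
      · exact ⟨i', by rw [← hia i' hii] at hi'; exact hi',
          fun j hj => (hia j (hii.trans hj)).trans (hia' j hj)⟩
      · subst hii
        exact ⟨i, lt_trans hi' hi, fun j hj => (hia j hj).trans (hia' j hj)⟩
      · exact ⟨i, by rw [← hia' i hii]; exact hi,
          fun j hj => (hia j hj).trans (hia' j (hii.trans hj))⟩

theorem asymm (hab : drlt a b) : ¬ drlt b a := fun h => irrefl a (trans hab h)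

theorem add_right (c : Fin N →₀ ℕ) (hab : drlt a b) : drlt (a + c) (b + c) := by
  have hsum : ∀ x : Fin N →₀ ℕ, (∑ i, (x + c) i) = (∑ i, x i) + (∑ i, c i) := by
    intro x; rw [← Finset.sum_add_distrib]; rfl
  rcases hab with hab | ⟨hab, i, hi, hia⟩
  · exact Or.inl (by rw [hsum, hsum]; omega)
  · refine Or.inr ⟨by rw [hsum, hsum, hab], i, ?_, fun j hj => ?_⟩
    · simpa using hi
    · simp only [Finsupp.add_apply]; rw [hia j hj]

theorem add_right_cancel (hab : drlt (a + c) (b + c)) : drlt a b := by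
  have hsum : ∀ x : Fin N →₀ ℕ, (∑ i, (x + c) i) = (∑ i, x i) + (∑ i, c i) := by
    intro x; rw [← Finset.sum_add_distrib]; rfl
  rcases hab with hab | ⟨hab, i, hi, hia⟩
  · rw [hsum, hsum] at hab; exact Or.inl (by omega)
  · rw [hsum, hsum] at hab
    refine Or.inr ⟨by omega, i, ?_, fun j hj => ?_⟩
    · simpa using hi
    · have := hia j hj; simpa using this

theorem deg_le (hab : drlt a b) : (∑ i, a i) ≤ (∑ i, b i) := by
  rcases hab with hab | ⟨hab, -⟩
  · exact hab.le
  · exact hab.le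

theorem of_deg_lt (h : (∑ i, a i) < (∑ i, b i)) : drlt a b := Or.inl h

end Drlt

/-- `d` is the leading monomial (exponent) of `f` with respect to the term order `lt`. -/
def IsLeadMon {K : Type*} [Field K] {N : ℕ}
    (lt : (Fin N →₀ ℕ) → (Fin N →₀ ℕ) → Prop)
    (f : MvPolynomial (Fin N) K) (d : Fin N →₀ ℕ) : Prop :=
  d ∈ f.support ∧ ∀ e ∈ f.support, e ≠ d → lt e d

section LM

variable {K : Type*} [Field K] {N : ℕ}

theorem isLeadMon_unique {f : MvPolynomial (Fin N) K} {d d' : Fin N →₀ ℕ}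
    (h : IsLeadMon drlt f d) (h' : IsLeadMon drlt f d') : d = d' := by
  by_contra hne
  exact Drlt.asymm (h'.2 d h.1 hne) (h.2 d' h'.1 (Ne.symm hne))

theorem exists_isLeadMon {f : MvPolynomial (Fin N) K} (hf : f ≠ 0) :
    ∃ d, IsLeadMon drlt f d := by
  have hs : f.support.Nonempty := MvPolynomial.support_nonempty.mpr hf
  -- find a drlt-max element of a nonempty finset
  suffices h : ∀ s : Finset (Fin N →₀ ℕ), s.Nonempty →
      ∃ d ∈ s, ∀ e ∈ s, e ≠ d → drlt e d by
    obtain ⟨d, hd, hmax⟩ := h f.support hs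
    exact ⟨d, hd, hmax⟩
  intro s
  induction s using Finset.induction_on with
  | empty => rintro ⟨x, hx⟩; simp at hx
  | @insert a s hx ih =>
    intro _
    rcases s.eq_empty_or_nonempty with rfl | hs'
    · exact ⟨a, by simp, by intro e he hne; simp at he; exact absurd he hne⟩
    · obtain ⟨d, hd, hmax⟩ := ih hs'
      by_cases had : a = d
      · subst had
        exact ⟨a, Finset.mem_insert_self _ _, fun e he hne => by
          rcases Finset.mem_insert.mp he with rfl | he'
          · exact absurd rfl hne
          · exact hmax e he' hne⟩
      rcases Drlt.total had with h1 | h1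
      · refine ⟨d, Finset.mem_insert_of_mem hd, fun e he hne => ?_⟩
        rcases Finset.mem_insert.mp he with rfl | he'
        · exact h1
        · exact hmax e he' hne
      · refine ⟨a, Finset.mem_insert_self _ _, fun e he hne => ?_⟩
        rcases Finset.mem_insert.mp he with rfl | he'
        · exact absurd rfl hne
        · by_cases hed : e = d
          · subst hed; exact h1
          · exact Drlt.trans (hmax e he' hed) h1

theorem drlt_add_of_le {u d v e : Fin N →₀ ℕ}
    (hu : u = d ∨ drlt u d) (hv : v = e ∨ drlt v e) (hne : ¬(u = d ∧ v = e)) :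
    drlt (u + v) (d + e) := by
  rcases hu with rfl | hu
  · rcases hv with rfl | hv
    · exact absurd ⟨rfl, rfl⟩ hne
    · rw [add_comm u v, add_comm u e]; exact Drlt.add_right u hv
  · rcases hv with rfl | hv
    · exact Drlt.add_right v hu
    · exact Drlt.trans (Drlt.add_right v hu) (by
        rw [add_comm d v, add_comm d e]; exact Drlt.add_right d hv)

theorem coeff_mul_leadMon {f g : MvPolynomial (Fin N) K} {d e : Fin N →₀ ℕ}
    (hf : IsLeadMon drlt f d) (hg : IsLeadMon drlt g e) :
    MvPolynomial.coeff (d + e) (f * g) = MvPolynomial.coeff d f * MvPolynomial.coeff e g := by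
  rw [MvPolynomial.coeff_mul]
  refine Finset.sum_eq_single_of_mem (d, e) (Finset.HasAntidiagonal.mem_antidiagonal.mpr rfl) ?_
  · rintro ⟨u, v⟩ huv hne
    by_contra hz
    have hu : u ∈ f.support := by
      rw [MvPolynomial.mem_support_iff]; intro h0; rw [h0, zero_mul] at hz; exact hz rfl
    have hv : v ∈ g.support := by
      rw [MvPolynomial.mem_support_iff]; intro h0; rw [h0, mul_zero] at hz; exact hz rfl
    have hud : u = d ∨ drlt u d := by
      by_cases h : u = d
      · exact Or.inl h
      · exact Or.inr (hf.2 u hu h)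
    have hve : v = e ∨ drlt v e := by
      by_cases h : v = e
      · exact Or.inl h
      · exact Or.inr (hg.2 v hv h)
    have : drlt (u + v) (d + e) := drlt_add_of_le hud hve (by
      rintro ⟨rfl, rfl⟩; exact hne rfl)
    rw [Finset.HasAntidiagonal.mem_antidiagonal] at huv
    rw [huv] at this
    exact Drlt.irrefl _ this

theorem IsLeadMon.mul {f g : MvPolynomial (Fin N) K} {d e : Fin N →₀ ℕ}
    (hf : IsLeadMon drlt f d) (hg : IsLeadMon drlt g e) :
    IsLeadMon drlt (f * g) (d + e) := by
  constructor
  · rw [MvPolynomial.mem_support_iff, coeff_mul_leadMon hf hg]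
    exact mul_ne_zero (MvPolynomial.mem_support_iff.mp hf.1)
      (MvPolynomial.mem_support_iff.mp hg.1)
  · intro s hs hne
    have := MvPolynomial.support_mul f g hs
    rw [Finset.mem_add] at this
    obtain ⟨u, hu, v, hv, rfl⟩ := this
    have hud : u = d ∨ drlt u d := by
      by_cases h : u = d
      · exact Or.inl h
      · exact Or.inr (hf.2 u hu h)
    have hve : v = e ∨ drlt v e := by
      by_cases h : v = e
      · exact Or.inl h
      · exact Or.inr (hg.2 v hv h)
    exact drlt_add_of_le hud hve (by rintro ⟨rfl, rfl⟩; exact hne rfl)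

theorem deg_le_of_mem_support {f : MvPolynomial (Fin N) K} {d : Fin N →₀ ℕ}
    (hf : IsLeadMon drlt f d) {m : Fin N →₀ ℕ} (hm : m ∈ f.support) :
    (∑ i, m i) ≤ (∑ i, d i) := by
  by_cases h : m = d
  · subst h; rfl
  · exact Drlt.deg_le (hf.2 m hm h)

end LM

section Struct

variable {K : Type*} [Field K]

/-- `w`-free polynomials. -/
def Pw (p : MvPolynomial (Fin 4) K) : Prop := ∀ m ∈ p.support, m 3 = 0

theorem Pw.zero : Pw (0 : MvPolynomial (Fin 4) K) := by intro m hm; simp at hm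

theorem Pw.add {p q : MvPolynomial (Fin 4) K} (hp : Pw p) (hq : Pw q) : Pw (p + q) := by
  intro m hm
  rcases Finset.mem_union.mp (MvPolynomial.support_add hm) with h | h
  · exact hp m h
  · exact hq m h

theorem Pw.mul {p q : MvPolynomial (Fin 4) K} (hp : Pw p) (hq : Pw q) : Pw (p * q) := by
  intro m hm
  obtain ⟨u, hu, v, hv, rfl⟩ := Finset.mem_add.mp (MvPolynomial.support_mul p q hm)
  have := hp u hu; have := hq v hv
  simp only [Finsupp.add_apply]; omega

theorem Pw.monomial {m : Fin 4 →₀ ℕ} (hm : m 3 = 0) (c : K) : Pw (MvPolynomial.monomial m c) := by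
  intro m' hm'
  have := MvPolynomial.support_monomial_subset hm'
  simp at this; subst this; exact hm

theorem Pw.C (c : K) : Pw (MvPolynomial.C c : MvPolynomial (Fin 4) K) := by
  rw [MvPolynomial.C_apply]; exact Pw.monomial rfl c

theorem Pw.one : Pw (1 : MvPolynomial (Fin 4) K) := by rw [← MvPolynomial.C_1]; exact Pw.C 1

theorem Pw.X {i : Fin 4} (hi : i ≠ 3) : Pw (MvPolynomial.X i : MvPolynomial (Fin 4) K) := by
  rw [MvPolynomial.X] ; exact Pw.monomial (by
    rw [Finsupp.single_apply]; simp [hi]) 1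

theorem Pw.neg {p : MvPolynomial (Fin 4) K} (hp : Pw p) : Pw (-p) := by
  intro m hm; rw [MvPolynomial.support_neg] at hm; exact hp m hm

theorem Pw.sub {p q : MvPolynomial (Fin 4) K} (hp : Pw p) (hq : Pw q) : Pw (p - q) := by
  rw [sub_eq_add_neg]; exact hp.add hq.neg

theorem Pw.pow {p : MvPolynomial (Fin 4) K} (hp : Pw p) (n : ℕ) : Pw (p ^ n) := by
  induction n with
  | zero => simpa using Pw.one
  | succ n ih => rw [pow_succ]; exact ih.mul hp

/-- Splitting off the `w`-free part. -/
theorem exists_w_split (r : MvPolynomial (Fin 4) K) :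
    ∃ r₀ r', Pw r₀ ∧ r = r₀ + MvPolynomial.X 3 * r' := by
  induction r using MvPolynomial.induction_on with
  | C a => exact ⟨MvPolynomial.C a, 0, Pw.C a, by ring⟩
  | add p q hp hq =>
    obtain ⟨p₀, p', hp₀, hpe⟩ := hp
    obtain ⟨q₀, q', hq₀, hqe⟩ := hq
    exact ⟨p₀ + q₀, p' + q', hp₀.add hq₀, by rw [hpe, hqe]; ring⟩
  | mul_X p i hp =>
    obtain ⟨p₀, p', hp₀, hpe⟩ := hp
    by_cases hi : i = 3
    · subst hi
      exact ⟨0, p, Pw.zero, by rw [hpe]; ring⟩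
    · exact ⟨p₀ * MvPolynomial.X i, p' * MvPolynomial.X i, hp₀.mul (Pw.X hi), by
        rw [hpe]; ring⟩

end Struct

section StructLemma

variable {K : Type*} [Field K]

open MvPolynomial

private noncomputable def qq : MvPolynomial (Fin 4) K := X 0 * X 2 - X 1 ^ 2

theorem Pw.qq : Pw (qq : MvPolynomial (Fin 4) K) :=
  ((Pw.X (by decide)).mul (Pw.X (by decide))).sub ((Pw.X (by decide)).pow 2)

/-- `f` has the structured form. -/
def StrP (b : ℕ) (f : MvPolynomial (Fin 4) K) : Prop :=
  ∃ B C D F : MvPolynomial (Fin 4) K, Pw B ∧ Pw C ∧ Pw D ∧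
    f = C * qq ^ 2 + D * (X 0 ^ (b - 1) * qq)
      + (B * qq - D * X 2 ^ b) * X 3 + F * X 3 ^ 2

theorem StrP.add {b : ℕ} {f g : MvPolynomial (Fin 4) K} (hf : StrP b f) (hg : StrP b g) :
    StrP b (f + g) := by
  obtain ⟨B, C, D, F, hB, hC, hD, rfl⟩ := hf
  obtain ⟨B', C', D', F', hB', hC', hD', rfl⟩ := hg
  exact ⟨B + B', C + C', D + D', F + F', hB.add hB', hC.add hC', hD.add hD', by ring⟩

theorem StrP.zero {b : ℕ} : StrP b (0 : MvPolynomial (Fin 4) K) :=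
  ⟨0, 0, 0, 0, Pw.zero, Pw.zero, Pw.zero, by ring⟩

theorem StrP.mul_X {b : ℕ} {f : MvPolynomial (Fin 4) K} (hf : StrP b f) (i : Fin 4) :
    StrP b (f * X i) := by
  obtain ⟨B, C, D, F, hB, hC, hD, rfl⟩ := hf
  by_cases hi : i = 3
  · subst hi
    refine ⟨C * qq + D * X 0 ^ (b - 1), 0, 0,
      (B * qq - D * X 2 ^ b) + F * X 3, Pw.add (hC.mul Pw.qq) (hD.mul ((Pw.X (by decide)).pow _)),
      Pw.zero, Pw.zero, by ring⟩
  · exact ⟨B * X i, C * X i, D * X i, F * X i, hB.mul (Pw.X hi), hC.mul (Pw.X hi),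
      hD.mul (Pw.X hi), by ring⟩

theorem StrP.smul {b : ℕ} {f : MvPolynomial (Fin 4) K} (hf : StrP b f)
    (r : MvPolynomial (Fin 4) K) : StrP b (r * f) := by
  induction r using MvPolynomial.induction_on with
  | C a =>
    obtain ⟨B, C, D, F, hB, hC, hD, rfl⟩ := hf
    exact ⟨MvPolynomial.C a * B, MvPolynomial.C a * C, MvPolynomial.C a * D,
      MvPolynomial.C a * F, (Pw.C a).mul hB, (Pw.C a).mul hC, (Pw.C a).mul hD, by ring⟩
  | add p q hp hq => rw [add_mul]; exact hp.add hq
  | mul_X p i hp => rw [mul_comm p (X i), mul_assoc, mul_comm]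
                    exact (hp.mul_X i)

theorem structP_of_mem_span {b : ℕ} {f : MvPolynomial (Fin 4) K}
    (hf : f ∈ Ideal.span ({(X 3 : MvPolynomial (Fin 4) K) ^ 2, X 3 * qq, qq ^ 2,
      X 0 ^ (b - 1) * qq - X 2 ^ b * X 3} : Set (MvPolynomial (Fin 4) K))) :
    StrP b f := by
  refine Submodule.span_induction ?_ ?_ ?_ ?_ hf
  · intro g hg
    simp only [Set.mem_insert_iff, Set.mem_singleton_iff] at hg
    rcases hg with rfl | rfl | rfl | rfl
    · exact ⟨0, 0, 0, 1, Pw.zero, Pw.zero, Pw.zero, by ring⟩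
    · exact ⟨1, 0, 0, 0, Pw.one, Pw.zero, Pw.zero, by ring⟩
    · exact ⟨0, 1, 0, 0, Pw.zero, Pw.one, Pw.zero, by ring⟩
    · exact ⟨0, 0, 1, 0, Pw.zero, Pw.zero, Pw.one, by ring⟩
  · exact StrP.zero
  · intro x y _ _ hx hy; exact hx.add hy
  · intro a x _ hx; rw [smul_eq_mul]; exact hx.smul a

end StructLemma

section Psi

variable {K : Type*} [Field K]

open MvPolynomial

/-- exponent map for the parametrization `x ↦ s², y ↦ st, z ↦ t², w ↦ 0`. -/
noncomputable def Phi (m : Fin 4 →₀ ℕ) : Fin 2 →₀ ℕ :=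
  Finsupp.single 0 (2 * m 0 + m 1) + Finsupp.single 1 (m 1 + 2 * m 2)

theorem Phi_apply_0 (m : Fin 4 →₀ ℕ) : Phi m 0 = 2 * m 0 + m 1 := by
  simp [Phi, Finsupp.single_apply]

theorem Phi_apply_1 (m : Fin 4 →₀ ℕ) : Phi m 1 = m 1 + 2 * m 2 := by
  simp [Phi, Finsupp.single_apply]

noncomputable def psi : MvPolynomial (Fin 4) K →ₐ[K] MvPolynomial (Fin 2) K :=
  aeval ![X 0 ^ 2, X 0 * X 1, X 1 ^ 2, 0]

theorem psi_monomial (m : Fin 4 →₀ ℕ) (hm : m 3 = 0) (c : K) :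
    psi (monomial m c) = monomial (Phi m) c := by
  rw [psi, aeval_monomial]
  rw [Finsupp.prod_fintype _ _ (fun i => pow_zero _)]
  rw [Fin.prod_univ_four]
  simp only [Matrix.cons_val_zero, Matrix.cons_val_one, Matrix.head_cons]
  rw [hm, pow_zero, mul_one]
  have : (monomial (Phi m) c : MvPolynomial (Fin 2) K)
      = MvPolynomial.C c * X 0 ^ (Phi m 0) * X 1 ^ (Phi m 1) := by
    rw [monomial_eq, Finsupp.prod_fintype _ _ (fun i => pow_zero _), Fin.prod_univ_two]
    ring
  rw [this, Phi_apply_0, Phi_apply_1]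
  rw [algebraMap_eq]
  have h2 : (![(X 0:MvPolynomial (Fin 2) K) ^ 2, X 0 * X 1, X 1 ^ 2, 0]) 2 = X 1 ^ 2 := rfl
  rw [h2, pow_add, pow_mul, pow_add, pow_mul]
  ring

end Psi

section Psi2

variable {K : Type*} [Field K]

open MvPolynomial

theorem psi_eq_sum {h : MvPolynomial (Fin 4) K} (hP : Pw h) :
    psi h = ∑ m ∈ h.support, monomial (Phi m) (coeff m h) := by
  conv_lhs => rw [h.as_sum]
  rw [map_sum]
  exact Finset.sum_congr rfl fun m hm => psi_monomial m (hP m hm) _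

theorem coeff_psi {h : MvPolynomial (Fin 4) K} (hP : Pw h) (μ : Fin 2 →₀ ℕ) :
    coeff μ (psi h) = ∑ m ∈ h.support.filter (fun m => Phi m = μ), coeff m h := by
  rw [psi_eq_sum hP, MvPolynomial.coeff_sum, Finset.sum_filter]
  exact Finset.sum_congr rfl fun m _ => by rw [coeff_monomial]

theorem phi_fiber_drlt {m m' : Fin 4 →₀ ℕ} (h3 : m 3 = 0) (h3' : m' 3 = 0)
    (h1 : m 1 ≤ 1) (hΦ : Phi m' = Phi m) (hne : m' ≠ m) : drlt m m' := by
  have e0 : 2 * m' 0 + m' 1 = 2 * m 0 + m 1 := by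
    have := congrArg (fun f => f 0) hΦ
    simpa [Phi_apply_0] using this
  have e1 : m' 1 + 2 * m' 2 = m 1 + 2 * m 2 := by
    have := congrArg (fun f => f 1) hΦ
    simpa [Phi_apply_1] using this
  have hne1 : m' 1 ≠ m 1 := by
    intro hEq
    apply hne
    ext i
    have h0' : m' 0 = m 0 := by omega
    have h2' : m' 2 = m 2 := by omega
    fin_cases i <;> simp_all
  have h2lt : m' 2 < m 2 ∧ m 2 < m' 2 + (m' 1 - m 1) := by omega
  refine Or.inr ⟨by rw [Fin.sum_univ_four, Fin.sum_univ_four]; omega,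
    2, h2lt.1, fun j hj => ?_⟩
  have hj3 : j = 3 := by
    rw [Fin.lt_def] at hj
    exact Fin.ext (by simpa using by omega)
  rw [hj3, h3, h3']

/-- If the lead monomial of a `w`-free polynomial has `y`-degree at most 1,
its `Phi`-fiber in the support is a singleton. -/
theorem coeff_psi_leadMon {h : MvPolynomial (Fin 4) K} (hP : Pw h) {m : Fin 4 →₀ ℕ}
    (hlm : IsLeadMon drlt h m) (h1 : m 1 ≤ 1) :
    coeff (Phi m) (psi h) = coeff m h := by
  rw [coeff_psi hP]
  have : h.support.filter (fun m' => Phi m' = Phi m) = {m} := by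
    apply Finset.ext
    intro m'
    simp only [Finset.mem_filter, Finset.mem_singleton]
    constructor
    · rintro ⟨hm', hphi⟩
      by_contra hne
      exact Drlt.asymm (hlm.2 m' hm' hne)
        (phi_fiber_drlt (hP m hlm.1) (hP m' hm') h1 hphi hne)
    · rintro rfl
      exact ⟨hlm.1, rfl⟩
  rw [this, Finset.sum_singleton]

theorem psi_qq : psi (qq : MvPolynomial (Fin 4) K) = 0 := by
  have h0 : psi (X 0 : MvPolynomial (Fin 4) K) = X 0 ^ 2 := by simp [psi]
  have h1 : psi (X 1 : MvPolynomial (Fin 4) K) = X 0 * X 1 := by simp [psi]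
  have h2 : psi (X 2 : MvPolynomial (Fin 4) K) = X 1 ^ 2 := by simp [psi]
  rw [qq, map_sub, map_mul, map_pow, h0, h1, h2]
  ring

theorem psi_X3 : psi (X 3 : MvPolynomial (Fin 4) K) = 0 := by simp [psi]

end Psi2

section Ker

variable {K : Type*} [Field K]

open MvPolynomial

theorem phi_inj_low {m m' : Fin 4 →₀ ℕ} (h3 : m 3 = 0) (h3' : m' 3 = 0)
    (h1 : m 1 ≤ 1) (h1' : m' 1 ≤ 1) (hΦ : Phi m' = Phi m) : m' = m := by
  have e0 : 2 * m' 0 + m' 1 = 2 * m 0 + m 1 := by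
    have := congrArg (fun f => f 0) hΦ
    simpa [Phi_apply_0] using this
  have e1 : m' 1 + 2 * m' 2 = m 1 + 2 * m 2 := by
    have := congrArg (fun f => f 1) hΦ
    simpa [Phi_apply_1] using this
  ext i
  fin_cases i <;> simp_all <;> omega

theorem psi_inj_low {h : MvPolynomial (Fin 4) K} (hP : Pw h)
    (hb : ∀ m ∈ h.support, m 1 ≤ 1) (h0 : psi h = 0) : h = 0 := by
  ext m
  rw [coeff_zero]
  by_cases hm : m ∈ h.support
  · have : h.support.filter (fun m' => Phi m' = Phi m) = {m} := by
      apply Finset.ext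
      intro m'
      simp only [Finset.mem_filter, Finset.mem_singleton]
      constructor
      · rintro ⟨hm', hphi⟩
        exact phi_inj_low (hP m hm) (hP m' hm') (hb m hm) (hb m' hm') hphi
      · rintro rfl; exact ⟨hm, rfl⟩
    have hc := coeff_psi hP (Phi m)
    rw [h0, coeff_zero, this, Finset.sum_singleton] at hc
    exact hc.symm
  · exact notMem_support_iff.mp hm

theorem coord_bound_mul {p q : MvPolynomial (Fin 4) K} {i : Fin 4} {a c : ℕ}
    (hp : ∀ m ∈ p.support, m i ≤ a) (hq : ∀ m ∈ q.support, m i ≤ c) :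
    ∀ m ∈ (p * q).support, m i ≤ a + c := by
  intro m hm
  obtain ⟨u, hu, v, hv, rfl⟩ := Finset.mem_add.mp (MvPolynomial.support_mul p q hm)
  have := hp u hu; have := hq v hv
  simp only [Finsupp.add_apply]; omega

theorem coord_bound_X {j i : Fin 4} {a : ℕ} (ha : (Finsupp.single j 1 : Fin 4 →₀ ℕ) i ≤ a) :
    ∀ m ∈ (X j : MvPolynomial (Fin 4) K).support, m i ≤ a := by
  intro m hm
  rw [MvPolynomial.support_X, Finset.mem_singleton] at hm
  subst hm; exact ha

theorem psi_ker_bound :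
    ∀ (k : ℕ) (h : MvPolynomial (Fin 4) K), Pw h → (∀ m ∈ h.support, m 1 ≤ k) →
      psi h = 0 → ∃ u, Pw u ∧ h = qq * u := by
  intro k
  induction k with
  | zero =>
    intro h hP hb h0
    exact ⟨0, Pw.zero, by rw [psi_inj_low hP (fun m hm => (hb m hm).trans (by norm_num)) h0,
      mul_zero]⟩
  | succ k ih =>
    intro h hP hb h0
    by_cases hk : k = 0
    · subst hk
      exact ⟨0, Pw.zero, by rw [psi_inj_low hP hb h0, mul_zero]⟩
    · set s : Fin 4 →₀ ℕ := Finsupp.single 1 2 with hs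
      set E := h.divMonomial s with hE
      set r := h.modMonomial s with hr
      have hsplit : monomial s 1 * E + r = h := divMonomial_add_modMonomial h s
      have hPE : Pw E := by
        intro m hm
        rw [mem_support_iff, coeff_divMonomial] at hm
        have := hP _ (mem_support_iff.mpr hm)
        simpa [hs, Finsupp.single_apply] using this
      have hbE : ∀ m ∈ E.support, m 1 ≤ k - 1 := by
        intro m hm
        rw [mem_support_iff, coeff_divMonomial] at hm
        have := hb _ (mem_support_iff.mpr hm)
        simp only [Finsupp.add_apply, hs, Finsupp.single_apply] at this
        simp at this
        omega
      have hPr : Pw r := by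
        intro m hm
        rw [mem_support_iff] at hm
        by_cases hle : s ≤ m
        · rw [coeff_modMonomial_of_le _ hle] at hm; exact absurd rfl hm
        · rw [coeff_modMonomial_of_not_le _ hle] at hm
          exact hP _ (mem_support_iff.mpr hm)
      have hbr : ∀ m ∈ r.support, m 1 ≤ 1 := by
        intro m hm
        rw [mem_support_iff] at hm
        by_cases hle : s ≤ m
        · rw [coeff_modMonomial_of_le _ hle] at hm; exact absurd rfl hm
        · rw [hs, Finsupp.single_le_iff] at hle
          omega
      set h' := X 0 * X 2 * E + r with hh'
      have hid : h + qq * E = h' := by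
        conv_lhs => rw [← hsplit]
        rw [hh', qq]
        have : (monomial s (1:K)) = X 1 ^ 2 := by
          rw [X_pow_eq_monomial, hs]
        rw [this]; ring
      have hPh' : Pw h' := (((Pw.X (by decide)).mul (Pw.X (by decide))).mul hPE).add hPr
      have hbh' : ∀ m ∈ h'.support, m 1 ≤ k := by
        intro m hm
        rcases Finset.mem_union.mp (MvPolynomial.support_add hm) with hm' | hm'
        · have step1 : ∀ m ∈ ((X 0 : MvPolynomial (Fin 4) K) * X 2).support, m 1 ≤ 0 :=
            coord_bound_mul (a := 0) (c := 0)
              (coord_bound_X (by simp [Finsupp.single_apply]))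
              (coord_bound_X (by simp [Finsupp.single_apply]))
          have := coord_bound_mul (a := 0) (c := k - 1) step1 hbE _ hm'
          omega
        · exact (hbr m hm').trans (by omega)
      have hpsih' : psi h' = 0 := by
        rw [← hid, map_add, map_mul, psi_qq, h0, zero_mul, add_zero]
      obtain ⟨u, hPu, hu⟩ := ih h' hPh' hbh' hpsih'
      refine ⟨u - E, hPu.sub hPE, ?_⟩
      have : h = h' - qq * E := by rw [← hid]; ring
      rw [this, hu]; ring

theorem psi_ker {h : MvPolynomial (Fin 4) K} (hP : Pw h) (h0 : psi h = 0) :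
    ∃ u, Pw u ∧ h = qq * u :=
  psi_ker_bound (h.degreeOf 1) h hP
    (fun m hm => by rw [degreeOf_eq_sup]; exact Finset.le_sup (f := fun m => m 1) hm) h0

end Ker

section Helpers

variable {K : Type*} [Field K]

open MvPolynomial

theorem fin4_gt2 {P : Fin 4 → Prop} (h3 : P 3) : ∀ j : Fin 4, (2:Fin 4) < j → P j := by
  intro j hj
  have : j = 3 := by
    rw [Fin.lt_def] at hj
    exact Fin.ext (by simpa using by omega)
  rwa [this]

theorem fin4_gt3 {P : Fin 4 → Prop} : ∀ j : Fin 4, (3:Fin 4) < j → P j := by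
  intro j hj
  rw [Fin.lt_def] at hj
  have := j.isLt
  simp at hj
  omega

theorem sum_fin4 (m : Fin 4 →₀ ℕ) : (∑ i, m i) = m 0 + m 1 + m 2 + m 3 :=
  Fin.sum_univ_four m

theorem isLeadMon_qq : IsLeadMon drlt (qq : MvPolynomial (Fin 4) K) (Finsupp.single 1 2) := by
  have hx : (X 0 * X 2 : MvPolynomial (Fin 4) K)
      = monomial (Finsupp.single 0 1 + Finsupp.single 2 1) 1 := by
    rw [X, X, monomial_mul, one_mul]
  have hy : (X 1 ^ 2 : MvPolynomial (Fin 4) K) = monomial (Finsupp.single 1 2) 1 :=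
    X_pow_eq_monomial
  have hsupp : (qq : MvPolynomial (Fin 4) K).support ⊆
      {Finsupp.single 0 1 + Finsupp.single 2 1, Finsupp.single 1 2} := by
    intro m hm
    rw [qq, sub_eq_add_neg] at hm
    rcases Finset.mem_union.mp (MvPolynomial.support_add hm) with h | h
    · rw [hx] at h
      have := MvPolynomial.support_monomial_subset h
      simp only [Finset.mem_singleton] at this
      simp [this]
    · rw [MvPolynomial.support_neg, hy] at h
      have := MvPolynomial.support_monomial_subset h
      simp only [Finset.mem_singleton] at this
      simp [this]
  have hcoeff : coeff (Finsupp.single 1 2) (qq : MvPolynomial (Fin 4) K) = -1 := by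
    rw [qq, coeff_sub, hx, hy, coeff_monomial, coeff_monomial]
    rw [if_neg (by
      intro hEq
      have := congrArg (fun f => f 1) hEq
      simp [Finsupp.single_apply] at this), if_pos rfl]
    ring
  constructor
  · rw [mem_support_iff, hcoeff]; norm_num
  · intro e he hne
    have := hsupp he
    simp only [Finset.mem_insert, Finset.mem_singleton] at this
    rcases this with rfl | rfl
    · refine Or.inr ⟨?_, 2, ?_, fin4_gt2 ?_⟩
      · rw [sum_fin4, sum_fin4]; simp [Finsupp.single_apply]
      · simp [Finsupp.single_apply]
      · simp [Finsupp.single_apply]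
    · exact absurd rfl hne

theorem eq_add_single3 {d : Fin 4 →₀ ℕ} (hd : d 3 = 1) :
    d = (d - Finsupp.single 3 1) + Finsupp.single 3 1 := by
  ext i
  simp only [Finsupp.add_apply, Finsupp.tsub_apply, Finsupp.single_apply]
  split_ifs with h
  · subst h; omega
  · omega

theorem drlt_deg_lt_of_w {m d : Fin 4 →₀ ℕ} (h : drlt m d) (hm : m 3 = 0) (hd : d 3 = 1) :
    (∑ i, m i) < (∑ i, d i) := by
  rcases h with h | ⟨hsum, i, hlt, hagree⟩
  · exact h
  · exfalso
    by_cases hi : i = 3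
    · subst hi; omega
    · have hilt : i < 3 := by
        rw [Fin.lt_def]
        have := i.isLt
        have : i.val ≠ 3 := fun hc => hi (Fin.ext (by simpa using hc))
        simp; omega
      have := hagree 3 hilt
      omega

theorem supp_psi_subset {h : MvPolynomial (Fin 4) K} (hP : Pw h) {ν : Fin 2 →₀ ℕ}
    (hν : ν ∈ (psi h).support) : ∃ m ∈ h.support, Phi m = ν := by
  rw [mem_support_iff, coeff_psi hP] at hν
  obtain ⟨m, hm⟩ := Finset.exists_ne_zero_of_sum_ne_zero hν
  exact ⟨m, (Finset.mem_filter.mp hm.1).1, (Finset.mem_filter.mp hm.1).2⟩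

theorem sum_Phi {m : Fin 4 →₀ ℕ} (hm : m 3 = 0) :
    (∑ i, Phi m i) = 2 * (∑ i, m i) := by
  rw [Fin.sum_univ_two, sum_fin4, Phi_apply_0, Phi_apply_1]
  omega

theorem psi_Xpow (k : ℕ) : psi ((X 0 : MvPolynomial (Fin 4) K) ^ k)
    = monomial (Finsupp.single 0 (2 * k)) 1 := by
  rw [map_pow, show psi (X 0 : MvPolynomial (Fin 4) K) = X 0 ^ 2 by simp [psi],
    ← pow_mul, X_pow_eq_monomial, mul_comm]

theorem psi_Zpow (k : ℕ) : psi ((X 2 : MvPolynomial (Fin 4) K) ^ k)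
    = monomial (Finsupp.single 1 (2 * k)) 1 := by
  rw [map_pow, show psi (X 2 : MvPolynomial (Fin 4) K) = X 1 ^ 2 by simp [psi],
    ← pow_mul, X_pow_eq_monomial, mul_comm]

end Helpers

section Decomp

variable {K : Type*} [Field K]

open MvPolynomial

theorem supp_mul_X3 {p : MvPolynomial (Fin 4) K} {m : Fin 4 →₀ ℕ}
    (hm : m ∈ (p * X 3).support) : 1 ≤ m 3 := by
  obtain ⟨u, hu, v, hv, rfl⟩ := Finset.mem_add.mp (MvPolynomial.support_mul _ _ hm)
  rw [MvPolynomial.support_X, Finset.mem_singleton] at hv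
  subst hv
  simp [Finsupp.add_apply, Finsupp.single_apply]

theorem supp_mul_X3sq {p : MvPolynomial (Fin 4) K} {m : Fin 4 →₀ ℕ}
    (hm : m ∈ (p * X 3 ^ 2).support) : 2 ≤ m 3 := by
  obtain ⟨u, hu, v, hv, rfl⟩ := Finset.mem_add.mp (MvPolynomial.support_mul _ _ hm)
  rw [X_pow_eq_monomial] at hv
  have := MvPolynomial.support_monomial_subset hv
  simp only [Finset.mem_singleton] at this
  subst this
  simp [Finsupp.add_apply, Finsupp.single_apply]

theorem coeff_w0 {f₀ f₁ F : MvPolynomial (Fin 4) K} (h₀ : Pw f₀) (h₁ : Pw f₁)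
    {m : Fin 4 →₀ ℕ} (hm : m 3 = 0) :
    coeff m (f₀ + f₁ * X 3 + F * X 3 ^ 2) = coeff m f₀ := by
  rw [coeff_add, coeff_add]
  have e1 : coeff m (f₁ * X 3) = 0 := by
    rw [← notMem_support_iff]
    intro h
    have := supp_mul_X3 h; omega
  have e2 : coeff m (F * X 3 ^ 2) = 0 := by
    rw [← notMem_support_iff]
    intro h
    have := supp_mul_X3sq h; omega
  rw [e1, e2]; ring

theorem coeff_w1 {f₀ f₁ F : MvPolynomial (Fin 4) K} (h₀ : Pw f₀) (h₁ : Pw f₁)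
    {m : Fin 4 →₀ ℕ} (hm : m 3 = 0) :
    coeff (m + Finsupp.single 3 1) (f₀ + f₁ * X 3 + F * X 3 ^ 2) = coeff m f₁ := by
  rw [coeff_add, coeff_add]
  have e0 : coeff (m + Finsupp.single 3 1) f₀ = 0 := by
    rw [← notMem_support_iff]
    intro h
    have := h₀ _ h
    simp [Finsupp.add_apply, Finsupp.single_apply] at this
  have e2 : coeff (m + Finsupp.single 3 1) (F * X 3 ^ 2) = 0 := by
    rw [← notMem_support_iff]
    intro h
    have := supp_mul_X3sq h
    simp [Finsupp.add_apply, Finsupp.single_apply, hm] at this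
  rw [e0, e2, coeff_mul_X]; ring

end Decomp

section Main

variable {K : Type*} [Field K]

open MvPolynomial

theorem main_divisible {b : ℕ} (hb : 1 ≤ b) {f : MvPolynomial (Fin 4) K} {d : Fin 4 →₀ ℕ}
    (hfS : StrP b f) (hd : IsLeadMon drlt f d) :
    Finsupp.single 3 2 ≤ d ∨ (Finsupp.single 1 2 + Finsupp.single 3 1) ≤ d ∨
      Finsupp.single 1 4 ≤ d ∨ (Finsupp.single 0 (b-1) + Finsupp.single 1 2) ≤ d := by
  have hnorm : ∃ B C D F : MvPolynomial (Fin 4) K, Pw B ∧ Pw C ∧ Pw D ∧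
      (D = 0 ∨ ¬∃ E, Pw E ∧ D = qq * E) ∧
      f = C * qq ^ 2 + D * (X 0 ^ (b - 1) * qq)
        + (B * qq - D * X 2 ^ b) * X 3 + F * X 3 ^ 2 := by
    obtain ⟨B, C, D, F, hB, hC, hD, hf⟩ := hfS
    by_cases hqD : ∃ E, Pw E ∧ D = qq * E
    · obtain ⟨E, hPE, rfl⟩ := hqD
      exact ⟨B - X 2 ^ b * E, C + X 0 ^ (b-1) * E, 0, F,
        hB.sub (((Pw.X (by decide)).pow b).mul hPE),
        hC.add (((Pw.X (by decide)).pow (b-1)).mul hPE), Pw.zero, Or.inl rfl,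
        by rw [hf]; ring⟩
    · exact ⟨B, C, D, F, hB, hC, hD, Or.inr hqD, hf⟩
  obtain ⟨B, C, D, F, hB, hC, hD, hDq, hf⟩ := hnorm
  set f₀ : MvPolynomial (Fin 4) K := C * qq ^ 2 + D * (X 0 ^ (b - 1) * qq) with hf₀
  set f₁ : MvPolynomial (Fin 4) K := B * qq - D * X 2 ^ b with hf₁
  have hPf₀ : Pw f₀ := (hC.mul (Pw.qq.pow 2)).add (hD.mul (((Pw.X (by decide)).pow _).mul Pw.qq))
  have hPf₁ : Pw f₁ := (hB.mul Pw.qq).sub (hD.mul ((Pw.X (by decide)).pow b))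
  have hfe : f = f₀ + f₁ * X 3 + F * X 3 ^ 2 := hf
  set g : MvPolynomial (Fin 4) K := C * qq + D * X 0 ^ (b - 1) with hg
  have hPg : Pw g := (hC.mul Pw.qq).add (hD.mul ((Pw.X (by decide)).pow _))
  have hf₀g : f₀ = qq * g := by rw [hf₀, hg]; ring
  have hcases : d 3 = 0 ∨ d 3 = 1 ∨ 2 ≤ d 3 := by omega
  rcases hcases with hd3 | hd3 | hd3
  · -- `d` has no `w`: lead of `f₀`
    have hcc : ∀ m : Fin 4 →₀ ℕ, m 3 = 0 → coeff m f = coeff m f₀ := fun m hm => by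
      rw [hfe]; exact coeff_w0 hPf₀ hPf₁ hm
    have hd0 : IsLeadMon drlt f₀ d := by
      constructor
      · rw [mem_support_iff, ← hcc d hd3]; exact mem_support_iff.mp hd.1
      · intro e he hne
        have he3 : e 3 = 0 := hPf₀ e he
        exact hd.2 e (mem_support_iff.mpr (by rw [hcc e he3]; exact mem_support_iff.mp he)) hne
    have hg0 : g ≠ 0 := by
      intro h
      have := hd0.1
      rw [hf₀g, h, mul_zero] at this
      simp at this
    obtain ⟨mg, hmg⟩ := exists_isLeadMon hg0
    have hlmf₀ : IsLeadMon drlt f₀ (Finsupp.single 1 2 + mg) := by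
      rw [hf₀g]; exact isLeadMon_qq.mul hmg
    have hdeq : d = Finsupp.single 1 2 + mg := isLeadMon_unique hd0 hlmf₀
    by_cases hy : 2 ≤ mg 1
    · refine Or.inr (Or.inr (Or.inl ?_))
      rw [Finsupp.single_le_iff, hdeq]
      simp only [Finsupp.add_apply, Finsupp.single_apply]
      simp; omega
    by_cases hx : b - 1 ≤ mg 0
    · refine Or.inr (Or.inr (Or.inr ?_))
      rw [Finsupp.le_def]
      intro i
      rw [hdeq]
      fin_cases i <;> simp [Finsupp.add_apply, Finsupp.single_apply] <;> omega
    exfalso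
    rcases hDq with rfl | hnq
    · have hgC : g = C * qq := by rw [hg]; ring
      have hC0 : C ≠ 0 := fun h => hg0 (by rw [hgC, h, zero_mul])
      obtain ⟨mc, hmc⟩ := exists_isLeadMon hC0
      have huniq := isLeadMon_unique hmg (by rw [hgC]; exact hmc.mul isLeadMon_qq)
      apply hy
      rw [huniq]
      simp [Finsupp.add_apply, Finsupp.single_apply]
    · have hpsiD : psi D ≠ 0 := fun h => hnq (psi_ker hD h)
      have hpsig : psi g = psi D * monomial (Finsupp.single 0 (2*(b-1))) 1 := by
        rw [hg, map_add, map_mul, map_mul, psi_qq, mul_zero, zero_add, psi_Xpow]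
      have hkey : coeff (Phi mg) (psi g) = coeff mg g := coeff_psi_leadMon hPg hmg (by omega)
      have hPmg : Phi mg ∈ (psi g).support :=
        mem_support_iff.mpr (by rw [hkey]; exact mem_support_iff.mp hmg.1)
      rw [hpsig] at hPmg
      obtain ⟨u, hu, v, hv, huv⟩ := Finset.mem_add.mp (MvPolynomial.support_mul _ _ hPmg)
      have hveq := MvPolynomial.support_monomial_subset hv
      simp only [Finset.mem_singleton] at hveq
      subst hveq
      have h0 : Phi mg 0 = u 0 + 2*(b-1) := by
        rw [← huv]; simp [Finsupp.add_apply, Finsupp.single_apply]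
      rw [Phi_apply_0] at h0
      omega
  · -- `d` has `w`-degree one: lead of `f₁`
    have he3 : (d - Finsupp.single 3 1 : Fin 4 →₀ ℕ) 3 = 0 := by
      simp only [Finsupp.tsub_apply, Finsupp.single_apply]
      simp; omega
    set e : Fin 4 →₀ ℕ := d - Finsupp.single 3 1 with hee
    have hde : d = e + Finsupp.single 3 1 := eq_add_single3 hd3
    have hcoe : ∀ m : Fin 4 →₀ ℕ, m 3 = 0 →
        coeff (m + Finsupp.single 3 1) f = coeff m f₁ := fun m hm => by
      rw [hfe]; exact coeff_w1 hPf₀ hPf₁ hm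
    have hlm1 : IsLeadMon drlt f₁ e := by
      constructor
      · rw [mem_support_iff, ← hcoe e he3, ← hde]; exact mem_support_iff.mp hd.1
      · intro e' he' hne
        have he3' : e' 3 = 0 := hPf₁ e' he'
        have hmem : e' + Finsupp.single 3 1 ∈ f.support :=
          mem_support_iff.mpr (by rw [hcoe e' he3']; exact mem_support_iff.mp he')
        have hne' : e' + Finsupp.single 3 1 ≠ d := by
          rw [hde]; intro hc; exact hne (by
            have := add_right_cancel hc; exact this)
        have := hd.2 _ hmem hne'
        rw [hde] at this
        exact Drlt.add_right_cancel this
    by_cases hy : 2 ≤ e 1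
    · refine Or.inr (Or.inl ?_)
      rw [Finsupp.le_def]
      intro i
      rw [hde]
      fin_cases i <;> simp [Finsupp.add_apply, Finsupp.single_apply] <;> omega
    exfalso
    have hf₁0 : f₁ ≠ 0 := by
      intro h
      have := hlm1.1
      rw [h] at this
      simp at this
    rcases hDq with rfl | hnq
    · have hBeq : f₁ = B * qq := by rw [hf₁]; ring
      have hB0 : B ≠ 0 := fun h => hf₁0 (by rw [hBeq, h, zero_mul])
      obtain ⟨mb, hmb⟩ := exists_isLeadMon hB0
      have huniq := isLeadMon_unique hlm1 (by rw [hBeq]; exact hmb.mul isLeadMon_qq)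
      apply hy
      rw [huniq]
      simp [Finsupp.add_apply, Finsupp.single_apply]
    · have hpsiD : psi D ≠ 0 := fun h => hnq (psi_ker hD h)
      have hpsig : psi g = psi D * monomial (Finsupp.single 0 (2*(b-1))) 1 := by
        rw [hg, map_add, map_mul, map_mul, psi_qq, mul_zero, zero_add, psi_Xpow]
      have hg0 : g ≠ 0 := by
        intro h
        rw [h, map_zero] at hpsig
        rcases mul_eq_zero.mp hpsig.symm with h' | h'
        · exact hpsiD h'
        · rw [MvPolynomial.monomial_eq_zero] at h'
          exact one_ne_zero h'
      obtain ⟨mg, hmg⟩ := exists_isLeadMon hg0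
      have hlmf₀ : IsLeadMon drlt f₀ (Finsupp.single 1 2 + mg) := by
        rw [hf₀g]; exact isLeadMon_qq.mul hmg
      have hm30 : (Finsupp.single 1 2 + mg : Fin 4 →₀ ℕ) 3 = 0 := hPf₀ _ hlmf₀.1
      have hmemf : Finsupp.single 1 2 + mg ∈ f.support := by
        rw [mem_support_iff, hfe, coeff_w0 hPf₀ hPf₁ hm30]
        exact mem_support_iff.mp hlmf₀.1
      have hnd : Finsupp.single 1 2 + mg ≠ d := by
        intro h; rw [← h] at hd3; omega
      have hlt := drlt_deg_lt_of_w (hd.2 _ hmemf hnd) hm30 hd3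
      have hsum_d : (∑ i, d i) = (∑ i, e i) + 1 := by
        rw [hde, sum_fin4, sum_fin4]
        simp [Finsupp.add_apply, Finsupp.single_apply]
        omega
      have hsum_m : (∑ i, (Finsupp.single 1 2 + mg : Fin 4 →₀ ℕ) i) = 2 + (∑ i, mg i) := by
        rw [sum_fin4, sum_fin4]
        simp [Finsupp.add_apply, Finsupp.single_apply]
        omega
      have hpsif₁ : psi f₁ = -(psi D * monomial (Finsupp.single 1 (2*b)) 1) := by
        rw [hf₁, map_sub, map_mul, map_mul, psi_qq, mul_zero, psi_Zpow]
        ring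
      have hkey : coeff (Phi e) (psi f₁) = coeff e f₁ := coeff_psi_leadMon hPf₁ hlm1 (by omega)
      have hPhie : Phi e ∈ (psi f₁).support :=
        mem_support_iff.mpr (by rw [hkey]; exact mem_support_iff.mp hlm1.1)
      rw [hpsif₁, MvPolynomial.support_neg] at hPhie
      obtain ⟨u, hu, v, hv, huv⟩ := Finset.mem_add.mp (MvPolynomial.support_mul _ _ hPhie)
      have hveq := MvPolynomial.support_monomial_subset hv
      simp only [Finset.mem_singleton] at hveq
      subst hveq
      have hν : u + Finsupp.single 0 (2*(b-1)) ∈ (psi g).support := by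
        rw [hpsig, mem_support_iff, MvPolynomial.coeff_mul_monomial, mul_one]
        exact mem_support_iff.mp hu
      obtain ⟨m', hm', hphm'⟩ := supp_psi_subset hPg hν
      have h1 : (∑ i, m' i) ≤ (∑ i, mg i) := deg_le_of_mem_support hmg hm'
      have h2 : (∑ i : Fin 2, Phi m' i) = (∑ i : Fin 2, u i) + 2*(b-1) := by
        rw [hphm', Fin.sum_univ_two, Fin.sum_univ_two]
        simp [Finsupp.add_apply, Finsupp.single_apply]
        omega
      have h3 : (∑ i : Fin 2, Phi m' i) = 2 * (∑ i, m' i) := sum_Phi (hPg m' hm')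
      have h4 : (∑ i : Fin 2, Phi e i) = (∑ i : Fin 2, u i) + 2*b := by
        rw [← huv, Fin.sum_univ_two, Fin.sum_univ_two]
        simp [Finsupp.add_apply, Finsupp.single_apply]
        omega
      have h5 : (∑ i : Fin 2, Phi e i) = 2 * (∑ i, e i) := sum_Phi he3
      rw [hsum_d, hsum_m] at hlt
      omega
  · exact Or.inl (Finsupp.single_le_iff.mpr hd3)

end Main

section Leads

variable {K : Type*} [Field K]

open MvPolynomial

theorem isLeadMon_monomial {m : Fin 4 →₀ ℕ} {c : K} (hc : c ≠ 0) :
    IsLeadMon drlt (monomial m c) m := by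
  constructor
  · rw [mem_support_iff, coeff_monomial, if_pos rfl]; exact hc
  · intro e he hne
    have := MvPolynomial.support_monomial_subset he
    simp only [Finset.mem_singleton] at this
    exact absurd this hne

theorem isLeadMon_ne_zero {f : MvPolynomial (Fin 4) K} {d : Fin 4 →₀ ℕ}
    (h : IsLeadMon drlt f d) : f ≠ 0 := by
  intro h0
  have := h.1
  rw [h0] at this
  simp at this

theorem isLeadMon_sub {f g : MvPolynomial (Fin 4) K} {df dg : Fin 4 →₀ ℕ}
    (hf : IsLeadMon drlt f df) (hg : IsLeadMon drlt g dg) (hlt : drlt dg df) :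
    IsLeadMon drlt (f - g) df := by
  have hsupp : (f - g).support ⊆ f.support ∪ g.support := by
    intro m hm
    rw [sub_eq_add_neg] at hm
    rcases Finset.mem_union.mp (MvPolynomial.support_add hm) with h | h
    · exact Finset.mem_union_left _ h
    · rw [MvPolynomial.support_neg] at h
      exact Finset.mem_union_right _ h
  have hdfg : coeff df g = 0 := by
    rw [← notMem_support_iff]
    intro h
    by_cases hEq : df = dg
    · subst hEq; exact Drlt.irrefl _ hlt
    · exact Drlt.asymm (hg.2 df h hEq) hlt
  constructor
  · rw [mem_support_iff, coeff_sub, hdfg, sub_zero]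
    exact mem_support_iff.mp hf.1
  · intro e he hne
    rcases Finset.mem_union.mp (hsupp he) with h | h
    · exact hf.2 e h hne
    · by_cases hEq : e = dg
      · subst hEq; exact hlt
      · exact Drlt.trans (hg.2 e h hEq) hlt

theorem isLeadMon_g1 : IsLeadMon drlt ((X 3 : MvPolynomial (Fin 4) K) ^ 2) (Finsupp.single 3 2) := by
  rw [X_pow_eq_monomial]
  exact isLeadMon_monomial one_ne_zero

theorem isLeadMon_X3 : IsLeadMon drlt (X 3 : MvPolynomial (Fin 4) K) (Finsupp.single 3 1) := by
  rw [X]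
  exact isLeadMon_monomial one_ne_zero

theorem isLeadMon_g2 : IsLeadMon drlt ((X 3 : MvPolynomial (Fin 4) K) * qq)
    (Finsupp.single 1 2 + Finsupp.single 3 1) := by
  have := isLeadMon_X3 (K := K) |>.mul isLeadMon_qq
  rwa [add_comm] at this

theorem isLeadMon_g3 : IsLeadMon drlt ((qq : MvPolynomial (Fin 4) K) ^ 2)
    (Finsupp.single 1 4) := by
  have := isLeadMon_qq (K := K) |>.mul isLeadMon_qq
  rw [show ((qq : MvPolynomial (Fin 4) K) * qq) = qq ^ 2 by ring] at this
  rwa [show (Finsupp.single 1 2 + Finsupp.single 1 2 : Fin 4 →₀ ℕ) = Finsupp.single 1 4 by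
    rw [← Finsupp.single_add]] at this

theorem isLeadMon_Xpow (j : Fin 4) (k : ℕ) :
    IsLeadMon drlt ((X j : MvPolynomial (Fin 4) K) ^ k) (Finsupp.single j k) := by
  rw [X_pow_eq_monomial]
  exact isLeadMon_monomial one_ne_zero

theorem isLeadMon_g4 {b : ℕ} (hb : 1 ≤ b) :
    IsLeadMon drlt ((X 0 : MvPolynomial (Fin 4) K) ^ (b-1) * qq - X 2 ^ b * X 3)
      (Finsupp.single 0 (b-1) + Finsupp.single 1 2) := by
  refine isLeadMon_sub (dg := Finsupp.single 2 b + Finsupp.single 3 1)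
    ((isLeadMon_Xpow 0 (b-1)).mul isLeadMon_qq)
    ((isLeadMon_Xpow 2 b).mul isLeadMon_X3) ?_
  refine Or.inr ⟨?_, 3, ?_, fin4_gt3⟩
  · rw [sum_fin4, sum_fin4]
    simp [Finsupp.add_apply, Finsupp.single_apply]
    omega
  · simp [Finsupp.add_apply, Finsupp.single_apply]

end Leads

/-- The initial ideal of `I` with respect to the term order `lt`. -/
noncomputable def initialIdeal {K : Type*} [Field K] {N : ℕ}
    (lt : (Fin N →₀ ℕ) → (Fin N →₀ ℕ) → Prop)
    (I : Ideal (MvPolynomial (Fin N) K)) : Ideal (MvPolynomial (Fin N) K) :=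
  Ideal.span {m | ∃ f ∈ I, f ≠ 0 ∧ ∃ d, IsLeadMon lt f d ∧ m = monomial d 1}

/-- In `K[x,y,z,w]` (with `x = X 0`, `y = X 1`, `z = X 2`, `w = X 3`), for `b ≥ 1` the
polynomials `w², w(xz−y²), (xz−y²)², x^{b−1}(xz−y²) − z^b w` form a Gröbner basis of the
ideal `I_X` they generate (degrevlex, `x > y > z > w`), and
`in(I_X) = ⟨w², y²w, y⁴, x^{b−1}y²⟩`. -/
theorem stmt12 {K : Type*} [Field K] [CharZero K] (b : ℕ) (hb : 1 ≤ b) :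
    let x : MvPolynomial (Fin 4) K := X 0
    let y : MvPolynomial (Fin 4) K := X 1
    let z : MvPolynomial (Fin 4) K := X 2
    let w : MvPolynomial (Fin 4) K := X 3
    let G : Set (MvPolynomial (Fin 4) K) :=
      {w ^ 2, w * (x * z - y ^ 2), (x * z - y ^ 2) ^ 2,
        x ^ (b - 1) * (x * z - y ^ 2) - z ^ b * w}
    initialIdeal drlt (Ideal.span G)
        = Ideal.span {m | ∃ g ∈ G, ∃ d, IsLeadMon drlt g d ∧ m = monomial d 1}
    ∧
    initialIdeal drlt (Ideal.span G)
        = Ideal.span {w ^ 2, y ^ 2 * w, y ^ 4, x ^ (b - 1) * y ^ 2} := by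
  intro x y z w G
  have hGset : G = ({(X 3 : MvPolynomial (Fin 4) K) ^ 2, X 3 * qq, qq ^ 2,
      X 0 ^ (b - 1) * qq - X 2 ^ b * X 3} : Set (MvPolynomial (Fin 4) K)) := by
    show G = _
    have h2 : (X 3 : MvPolynomial (Fin 4) K) * qq = w * (x * z - y ^ 2) := by
      rw [qq]
    have h4 : (X 0 : MvPolynomial (Fin 4) K) ^ (b - 1) * qq - X 2 ^ b * X 3
        = x ^ (b - 1) * (x * z - y ^ 2) - z ^ b * w := by
      rw [qq]
    rw [h2, h4]
    rfl
  set A : Fin 4 →₀ ℕ := Finsupp.single 3 2 with hA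
  set Bm : Fin 4 →₀ ℕ := Finsupp.single 1 2 + Finsupp.single 3 1 with hBm
  set Cm : Fin 4 →₀ ℕ := Finsupp.single 1 4 with hCm
  set Dm : Fin 4 →₀ ℕ := Finsupp.single 0 (b - 1) + Finsupp.single 1 2 with hDm
  set Mset : Set (MvPolynomial (Fin 4) K) :=
    {monomial A 1, monomial Bm 1, monomial Cm 1, monomial Dm 1} with hMset
  have hmemA : (monomial A 1 : MvPolynomial (Fin 4) K) ∈ Mset := Set.mem_insert _ _
  have hmemB : (monomial Bm 1 : MvPolynomial (Fin 4) K) ∈ Mset :=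
    Set.mem_insert_of_mem _ (Set.mem_insert _ _)
  have hmemC : (monomial Cm 1 : MvPolynomial (Fin 4) K) ∈ Mset :=
    Set.mem_insert_of_mem _ (Set.mem_insert_of_mem _ (Set.mem_insert _ _))
  have hmemD : (monomial Dm 1 : MvPolynomial (Fin 4) K) ∈ Mset :=
    Set.mem_insert_of_mem _ (Set.mem_insert_of_mem _ (Set.mem_insert_of_mem _ rfl))
  have hg1G : ((X 3 : MvPolynomial (Fin 4) K) ^ 2) ∈ G := by
    rw [hGset]; exact Set.mem_insert _ _
  have hg2G : ((X 3 : MvPolynomial (Fin 4) K) * qq) ∈ G := by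
    rw [hGset]; exact Set.mem_insert_of_mem _ (Set.mem_insert _ _)
  have hg3G : ((qq : MvPolynomial (Fin 4) K) ^ 2) ∈ G := by
    rw [hGset]; exact Set.mem_insert_of_mem _ (Set.mem_insert_of_mem _ (Set.mem_insert _ _))
  have hg4G : ((X 0 : MvPolynomial (Fin 4) K) ^ (b - 1) * qq - X 2 ^ b * X 3) ∈ G := by
    rw [hGset]
    exact Set.mem_insert_of_mem _ (Set.mem_insert_of_mem _ (Set.mem_insert_of_mem _ rfl))
  have EqA : initialIdeal drlt (Ideal.span G) = Ideal.span Mset := by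
    unfold initialIdeal
    apply le_antisymm
    · apply Ideal.span_le.mpr
      rintro m ⟨f, hfI, hf0, dd, hlead, rfl⟩
      rw [hGset] at hfI
      have hS : StrP b f := structP_of_mem_span hfI
      have hdiv := main_divisible hb hS hlead
      have key : ∀ d' : Fin 4 →₀ ℕ, d' ≤ dd → (monomial d' 1 : MvPolynomial (Fin 4) K) ∈ Mset →
          (monomial dd 1 : MvPolynomial (Fin 4) K) ∈ Ideal.span Mset := by
        intro d' hle hmem
        have : (monomial dd 1 : MvPolynomial (Fin 4) K)
            = monomial (dd - d') 1 * monomial d' 1 := by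
          rw [monomial_mul, one_mul, tsub_add_cancel_of_le hle]
        rw [this]
        exact Ideal.mul_mem_left _ _ (Ideal.subset_span hmem)
      rcases hdiv with h | h | h | h
      · exact key A h hmemA
      · exact key Bm h hmemB
      · exact key Cm h hmemC
      · exact key Dm h hmemD
    · apply Ideal.span_le.mpr
      rintro m (rfl | rfl | rfl | rfl)
      · exact Ideal.subset_span ⟨_, Ideal.subset_span hg1G, isLeadMon_ne_zero isLeadMon_g1,
          A, isLeadMon_g1, rfl⟩
      · exact Ideal.subset_span ⟨_, Ideal.subset_span hg2G, isLeadMon_ne_zero isLeadMon_g2,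
          Bm, isLeadMon_g2, rfl⟩
      · exact Ideal.subset_span ⟨_, Ideal.subset_span hg3G, isLeadMon_ne_zero isLeadMon_g3,
          Cm, isLeadMon_g3, rfl⟩
      · exact Ideal.subset_span ⟨_, Ideal.subset_span hg4G,
          isLeadMon_ne_zero (isLeadMon_g4 hb), Dm, isLeadMon_g4 hb, rfl⟩
  have EqB : Ideal.span {m | ∃ g ∈ G, ∃ d, IsLeadMon drlt g d ∧ m = monomial d 1}
      = Ideal.span Mset := by
    apply le_antisymm
    · apply Ideal.span_le.mpr
      rintro m ⟨g, hgG, dd, hlead, rfl⟩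
      rw [hGset] at hgG
      rcases hgG with rfl | rfl | rfl | rfl
      · rw [isLeadMon_unique hlead isLeadMon_g1]; exact Ideal.subset_span hmemA
      · rw [isLeadMon_unique hlead isLeadMon_g2]; exact Ideal.subset_span hmemB
      · rw [isLeadMon_unique hlead isLeadMon_g3]; exact Ideal.subset_span hmemC
      · rw [isLeadMon_unique hlead (isLeadMon_g4 hb)]; exact Ideal.subset_span hmemD
    · apply Ideal.span_le.mpr
      rintro m (rfl | rfl | rfl | rfl)
      · exact Ideal.subset_span ⟨_, hg1G, A, isLeadMon_g1, rfl⟩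
      · exact Ideal.subset_span ⟨_, hg2G, Bm, isLeadMon_g2, rfl⟩
      · exact Ideal.subset_span ⟨_, hg3G, Cm, isLeadMon_g3, rfl⟩
      · exact Ideal.subset_span ⟨_, hg4G, Dm, isLeadMon_g4 hb, rfl⟩
  constructor
  · exact EqA.trans EqB.symm
  · have hMeq : ({w ^ 2, y ^ 2 * w, y ^ 4, x ^ (b - 1) * y ^ 2} :
        Set (MvPolynomial (Fin 4) K)) = Mset := by
      have e1 : (w : MvPolynomial (Fin 4) K) ^ 2 = monomial A 1 := by
        show (X 3 : MvPolynomial (Fin 4) K) ^ 2 = monomial A 1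
        rw [hA, X_pow_eq_monomial]
      have e2 : (y : MvPolynomial (Fin 4) K) ^ 2 * w = monomial Bm 1 := by
        show (X 1 : MvPolynomial (Fin 4) K) ^ 2 * X 3 = monomial Bm 1
        rw [hBm, X_pow_eq_monomial, MvPolynomial.X, monomial_mul, one_mul]
      have e3 : (y : MvPolynomial (Fin 4) K) ^ 4 = monomial Cm 1 := by
        show (X 1 : MvPolynomial (Fin 4) K) ^ 4 = monomial Cm 1
        rw [hCm, X_pow_eq_monomial]
      have e4 : (x : MvPolynomial (Fin 4) K) ^ (b - 1) * y ^ 2 = monomial Dm 1 := by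
        show (X 0 : MvPolynomial (Fin 4) K) ^ (b - 1) * X 1 ^ 2 = monomial Dm 1
        rw [hDm, X_pow_eq_monomial, X_pow_eq_monomial, monomial_mul, one_mul]
      rw [e1, e2, e3, e4]
    rw [hMeq]
    exact EqA
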